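/- Let G be a finite connected simple graph with at least two vertices, let u be a vertex of degree 1 with unique neighbor w, and let G' be the induced subgraph on V ∖ {u}. For a divisor D on G, define the divisor D' on G' by D'(w) = D(w) + D(u) and D'(x) = D(x) for all other vertices x. Then D is linearly equivalent to an effective divisor on G if and only if D' is linearly equivalent to an effective divisor on G'. -/

import Mathlib

open Finset

/-- The degree of a vertex of a simple graph: the number of its neighbors. -/
noncomputable def degS {V : Type*} (G : SimpleGraph V) (v : V) : ℕ :=
  {u | G.Adj v u}.ncard

open Classical in
/-- The Laplacian matrix of a simple graph `G`:
`L v v = deg v`, `L v w = -1` if `v w` is an edge, and `0` otherwise. -/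
noncomputable def lapS {V : Type*} (G : SimpleGraph V) (v w : V) : ℤ :=
  if v = w then (degS G v : ℤ) else if G.Adj v w then -1 else 0

/-- The Laplacian applied to a firing function `f`, evaluated at `v`. -/
noncomputable def lapApplyS {V : Type*} [Fintype V] (G : SimpleGraph V)
    (f : V → ℤ) (v : V) : ℤ :=
  ∑ w, lapS G v w * f w

/-- A divisor is winnable if it is linearly equivalent to an effective divisor. -/
def WinnableS {V : Type*} [Fintype V] (G : SimpleGraph V) (D : V → ℤ) : Prop :=
  ∃ f : V → ℤ, ∀ v, 0 ≤ D v - lapApplyS G f v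

/-- The Baker–Norine rank of a divisor on a simple graph. -/
noncomputable def rankS {V : Type*} [Fintype V] (G : SimpleGraph V) (D : V → ℤ) : ℤ :=
  sSup {r : ℤ | ∀ E : V → ℤ, (∀ v, 0 ≤ E v) → (∑ v, E v) = r →
    WinnableS G (fun v => D v - E v)}

open Classical in
lemma lapApply_eq {V : Type*} [Fintype V] (G : SimpleGraph V) (f : V → ℤ) (v : V) :
    lapApplyS G f v = ∑ x, if G.Adj v x then f v - f x else 0 := by
  classical
  have hdeg : (degS G v : ℤ) = ((univ.filter (fun x => G.Adj v x)).card : ℤ) := by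
    unfold degS
    rw [Set.ncard_eq_toFinset_card']
    norm_cast
    congr 1
    ext x
    simp
  have key : ∀ x, lapS G v x * f x
      = (if v = x then (degS G v : ℤ) * f v else 0) + (if G.Adj v x then -f x else 0) := by
    intro x
    unfold lapS
    by_cases h : v = x
    · subst h; simp [G.irrefl]
    · simp only [if_neg h]
      by_cases h2 : G.Adj v x <;> simp [h2]
  have h2 : ∀ x, (if G.Adj v x then f v - f x else 0)
      = (if G.Adj v x then f v else 0) + (if G.Adj v x then -f x else 0) := by
    intro x; by_cases h : G.Adj v x <;> simp [h, sub_eq_add_neg]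
  unfold lapApplyS
  simp only [key, h2]
  rw [Finset.sum_add_distrib, Finset.sum_add_distrib]
  congr 1
  rw [Finset.sum_ite_eq univ v, if_pos (mem_univ v), ← Finset.sum_filter,
    Finset.sum_const, nsmul_eq_mul, hdeg]

open Classical in
lemma lapApply_erase {V : Type*} [Fintype V] [DecidableEq V] (G : SimpleGraph V)
    (f : V → ℤ) (x u : V) :
    ∑ y ∈ univ.erase u, (if G.Adj x y then f x - f y else 0)
      = lapApplyS G f x - (if G.Adj x u then f x - f u else 0) := by
  rw [lapApply_eq, ← Finset.sum_erase_add _ _ (mem_univ u)]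
  ring

open Classical in
lemma sum_ne_eq_erase {V : Type*} [Fintype V] [DecidableEq V] (u : V) (F : V → ℤ) :
    ∑ y : {x : V | x ≠ u}, F ↑y = ∑ y ∈ univ.erase u, F y := by
  rw [Finset.sum_subtype (univ.erase u) (fun x => ?_) F]
  simp

/-- **Pruning a leaf.**
Let `G` be a finite connected simple graph with at least two vertices, `u` a vertex of
degree `1` with unique neighbor `w`, and `G'` the induced subgraph on `V \ {u}`.
Define `D'` on `G'` by moving the value of `D` at `u` onto `w`.  Then `D` is linearly
equivalent to an effective divisor on `G` iff `D'` is so on `G'`. -/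
theorem winnable_iff_winnable_of_prune_leaf {V : Type*} [Fintype V] [DecidableEq V]
    (G : SimpleGraph V) (hconn : G.Connected) (hcard : 2 ≤ Fintype.card V)
    (u w : V) (huw : G.Adj u w) (huniq : ∀ x, G.Adj u x → x = w)
    (D : V → ℤ) :
    WinnableS G D ↔
      WinnableS (SimpleGraph.induce {x : V | x ≠ u} G)
        (fun x => if (x : V) = w then D w + D u else D (x : V)) := by
  classical
  have hwu : w ≠ u := huw.ne'
  have hAdjU : ∀ y, G.Adj u y ↔ y = w := fun y => ⟨huniq y, fun h => h ▸ huw⟩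
  have hAdjU' : ∀ y, G.Adj y u ↔ y = w := fun y =>
    ⟨fun h => huniq y h.symm, fun h => h ▸ huw.symm⟩
  -- Laplacian at u
  have hlapu : ∀ f : V → ℤ, lapApplyS G f u = f u - f w := by
    intro f
    rw [lapApply_eq]
    simp only [hAdjU]
    rw [Finset.sum_ite_eq' univ w (fun y => f u - f y)]
    simp
  -- Laplacian on the induced graph, in terms of G
  have hlap' : ∀ (f : V → ℤ) (x : {x : V | x ≠ u}),
      lapApplyS (SimpleGraph.induce {x : V | x ≠ u} G) (fun y => f ↑y) x
        = lapApplyS G f ↑x - (if (x : V) = w then f ↑x - f u else 0) := by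
    intro f x
    rw [lapApply_eq]
    have : ∀ y : {x : V | x ≠ u},
        (if (SimpleGraph.induce {x : V | x ≠ u} G).Adj x y then f ↑x - f ↑y else 0)
          = (if G.Adj ↑x ↑y then f ↑x - f ↑y else 0) := by
      intro y
      congr 1
    trans ∑ y : {x : V | x ≠ u}, (if G.Adj ↑x ↑y then f ↑x - f ↑y else 0)
    · exact Finset.sum_congr rfl (fun y _ => by convert this y)
    rw [sum_ne_eq_erase u (fun y => if G.Adj ↑x y then f ↑x - f y else 0)]
    rw [lapApply_erase]
    congr 2
    simp [hAdjU']
  constructor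
  · rintro ⟨f, hf⟩
    refine ⟨fun x => f ↑x, fun x => ?_⟩
    rw [hlap' f x]
    by_cases hxw : (x : V) = w
    · have h1 := hf w
      have h2 := hf u
      rw [hlapu] at h2
      simp only [hxw]
      split_ifs with h
      · linarith
      · simp at h
    · simp only [if_neg hxw]
      have h1 := hf ↑x
      linarith
  · rintro ⟨g, hg⟩
    refine ⟨fun x => if hx : x = u then g ⟨w, hwu⟩ + D u else g ⟨x, hx⟩, fun v => ?_⟩
    set f : V → ℤ := fun x => if hx : x = u then g ⟨w, hwu⟩ + D u else g ⟨x, hx⟩ with hfdef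
    have hfu : f u = g ⟨w, hwu⟩ + D u := by simp [hfdef]
    have hfne : ∀ (x : V) (hx : x ≠ u), f x = g ⟨x, hx⟩ := by
      intro x hx; simp [hfdef, hx]
    have hgf : ∀ x : {x : V | x ≠ u}, g x = f ↑x := by
      intro x; rw [hfne ↑x x.2]
    by_cases hv : v = u
    · subst hv
      rw [hlapu, hfu, hfne w hwu]
      simp
    · have hgv := hg ⟨v, hv⟩
      rw [funext hgf] at hgv
      rw [hlap' f ⟨v, hv⟩] at hgv
      simp only at hgv
      by_cases hvw : v = w
      · subst hvw
        rw [if_pos rfl, if_pos rfl] at hgv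
        have hDv : f v - f u = -(D u) := by rw [hfne v hwu, hfu]; ring
        linarith
      · rw [if_neg hvw, if_neg hvw] at hgv
        linarith
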